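/- In the polynomial ring ℂ[x, y, z, w] (the multivariate polynomial ring over ℂ in four variables), the radical of the ideal generated by w, (x²+y²+z²)·x, (x²+y²+z²)·y, and (x²+y²+z²)·z equals the ideal generated by w and x² + y² + z². -/

import Mathlib

open MvPolynomial Polynomial

lemma no_sqrt {T : Type*} [CommRing T] [IsDomain T] (h2 : (2:T) ≠ 0) {a : T} (ha : a ≠ 0)
    (s : Polynomial T) (hs : s^2 = -(Polynomial.X^2 + Polynomial.C a)) : False := by
  have hdeg : s.natDegree = 1 := by
    have h := congrArg Polynomial.natDegree hs
    rw [Polynomial.natDegree_pow, Polynomial.natDegree_neg, Polynomial.natDegree_X_pow_add_C] at h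
    omega
  have hrep := Polynomial.eq_X_add_C_of_natDegree_le_one hdeg.le
  set s1 := s.coeff 1 with hs1
  set s0 := s.coeff 0 with hs0def
  rw [hrep] at hs
  have hexp : (Polynomial.C s1 * Polynomial.X + Polynomial.C s0)^2
      = Polynomial.C (s1^2) * Polynomial.X^2 + Polynomial.C (2*(s0*s1)) * Polynomial.X
        + Polynomial.C (s0^2) := by
    push_cast [map_pow, map_mul, map_add, map_ofNat]
    ring
  rw [hexp] at hs
  have h2' := congrArg (fun p => Polynomial.coeff p 2) hs
  have h1' := congrArg (fun p => Polynomial.coeff p 1) hs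
  have h0' := congrArg (fun p => Polynomial.coeff p 0) hs
  simp only [Polynomial.coeff_add, Polynomial.coeff_neg, Polynomial.coeff_C_mul,
    Polynomial.coeff_X_pow, Polynomial.coeff_X, Polynomial.coeff_C] at h2' h1' h0'
  norm_num at h2' h1' h0'
  have hs1ne : s1 ≠ 0 := by
    intro h
    rw [h] at h2'
    exact h2 (by linear_combination (2 : T) * h2')
  rcases h1' with h | h | h
  · exact h2 h
  · rw [h] at h0'
    exact ha (by linear_combination h0')
  · exact hs1ne h


lemma prime_quadric :
    Prime ((X 0)^2 + (X 1)^2 + (X 2)^2 : MvPolynomial (Fin 3) ℂ) := by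
  have key : Irreducible (Polynomial.X^2
      + Polynomial.C ((X 0)^2 + (X 1)^2 : MvPolynomial (Fin 2) ℂ)) := by
    set c : MvPolynomial (Fin 2) ℂ := (X 0)^2 + (X 1)^2 with hc
    have hmon : (Polynomial.X^2 + Polynomial.C c).Monic :=
      Polynomial.monic_X_pow_add_C c (by norm_num)
    have hdeg : (Polynomial.X^2 + Polynomial.C c).natDegree = 2 :=
      Polynomial.natDegree_X_pow_add_C
    rw [hmon.irreducible_iff_roots_eq_zero_of_degree_le_three (by omega) (by omega)]
    rw [Multiset.eq_zero_iff_forall_notMem]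
    intro r hr
    rw [Polynomial.mem_roots hmon.ne_zero, Polynomial.IsRoot, Polynomial.eval_add,
      Polynomial.eval_pow, Polynomial.eval_X, Polynomial.eval_C] at hr
    -- r^2 + c = 0, i.e. (e r)^2 = -(X^2 + C (X 0)^2) after finSuccEquiv
    have hrc : r^2 = -c := by linear_combination hr
    have h2 : (2 : MvPolynomial (Fin 1) ℂ) ≠ 0 := by
      norm_num
    refine no_sqrt h2 (a := (X 0 : MvPolynomial (Fin 1) ℂ)^2)
      (pow_ne_zero 2 (MvPolynomial.X_ne_zero 0)) (finSuccEquiv ℂ 1 r) ?_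
    have := congrArg (finSuccEquiv ℂ 1) hrc
    rw [map_pow, map_neg, hc, map_add, map_pow, map_pow] at this
    rw [this]
    have h0 : finSuccEquiv ℂ 1 (X 0) = Polynomial.X := finSuccEquiv_X_zero
    have h1 : finSuccEquiv ℂ 1 (X 1) = Polynomial.C (X 0) :=
      finSuccEquiv_X_succ (j := 0)
    rw [h0, h1]
    push_cast [map_pow]
    ring
  have hP : Prime (Polynomial.X^2
      + Polynomial.C ((X 0)^2 + (X 1)^2 : MvPolynomial (Fin 2) ℂ)) :=
    UniqueFactorizationMonoid.irreducible_iff_prime.mp key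
  rw [← MulEquiv.prime_iff (finSuccEquiv ℂ 2).toRingEquiv.toMulEquiv]
  convert hP using 1
  have h0 : finSuccEquiv ℂ 2 (X 0) = Polynomial.X := finSuccEquiv_X_zero
  have h1 : finSuccEquiv ℂ 2 (X 1) = Polynomial.C (X 0) := finSuccEquiv_X_succ (j := 0)
  have h2 : finSuccEquiv ℂ 2 (X 2) = Polynomial.C (X 1) := finSuccEquiv_X_succ (j := 1)
  show finSuccEquiv ℂ 2 _ = _
  rw [map_add, map_add, map_pow, map_pow, map_pow, h0, h1, h2]
  push_cast [map_pow, map_add]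
  ring


noncomputable def gsub : Fin 4 → MvPolynomial (Fin 3) ℂ := ![X 0, X 1, X 2, 0]

noncomputable def phi : MvPolynomial (Fin 4) ℂ →ₐ[ℂ] MvPolynomial (Fin 3) ℂ := aeval gsub

noncomputable def psi : MvPolynomial (Fin 4) ℂ →ₐ[ℂ] MvPolynomial (Fin 4) ℂ :=
  (rename Fin.castSucc).comp phi

lemma psi_decomp (p : MvPolynomial (Fin 4) ℂ) :
    p - psi p ∈ Ideal.span {(X 3 : MvPolynomial (Fin 4) ℂ)} := by
  induction p using MvPolynomial.induction_on with
  | C a => simp [psi, phi]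
  | add p q hp hq => rw [map_add]; have := Ideal.add_mem _ hp hq; convert this using 1; ring
  | mul_X p n hp =>
    rw [map_mul]
    have key : p * X n - psi p * psi (X n)
        = (p - psi p) * X n + psi p * (X n - psi (X n)) := by ring
    rw [key]
    refine Ideal.add_mem _ (Ideal.mul_mem_right _ _ hp) ?_
    refine Ideal.mul_mem_left _ _ ?_
    fin_cases n <;>
      simp [psi, phi, gsub, Fin.castSucc, Fin.castAdd, Fin.castLE, Ideal.zero_mem] <;>
      exact Ideal.subset_span rfl

lemma span_eq_comap :
    Ideal.span {(X 3 : MvPolynomial (Fin 4) ℂ), (X 0)^2 + (X 1)^2 + (X 2)^2}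
      = Ideal.comap (phi : MvPolynomial (Fin 4) ℂ →+* MvPolynomial (Fin 3) ℂ)
          (Ideal.span {((X 0)^2 + (X 1)^2 + (X 2)^2 : MvPolynomial (Fin 3) ℂ)}) := by
  apply le_antisymm
  · rw [Ideal.span_le]
    rintro r (rfl | rfl)
    · rw [SetLike.mem_coe, Ideal.mem_comap]
      show phi (X 3) ∈ _
      have : phi (X 3) = 0 := by simp [phi, gsub]
      rw [this]; exact Ideal.zero_mem _
    · rw [SetLike.mem_coe, Ideal.mem_comap]
      show phi _ ∈ _
      have : phi ((X 0)^2 + (X 1)^2 + (X 2)^2 : MvPolynomial (Fin 4) ℂ)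
          = (X 0)^2 + (X 1)^2 + (X 2)^2 := by simp [phi, gsub]
      rw [this]; exact Ideal.subset_span rfl
  · intro p hp
    rw [Ideal.mem_comap, Ideal.mem_span_singleton] at hp
    obtain ⟨h, hh⟩ := hp
    have hh' : phi p = ((X 0)^2 + (X 1)^2 + (X 2)^2) * h := hh
    have hren : rename (Fin.castSucc) ((X 0)^2 + (X 1)^2 + (X 2)^2 : MvPolynomial (Fin 3) ℂ)
        = ((X 0)^2 + (X 1)^2 + (X 2)^2 : MvPolynomial (Fin 4) ℂ) := by
      simp only [map_add, map_pow, rename_X,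
        show Fin.castSucc (0:Fin 3) = (0:Fin 4) from rfl,
        show Fin.castSucc (1:Fin 3) = (1:Fin 4) from rfl,
        show Fin.castSucc (2:Fin 3) = (2:Fin 4) from rfl]
    have hψ : psi p = ((X 0)^2 + (X 1)^2 + (X 2)^2 : MvPolynomial (Fin 4) ℂ)
        * rename Fin.castSucc h := by
      show rename Fin.castSucc (phi p) = _
      rw [hh', map_mul, hren]
    have hd := psi_decomp p
    have hx3 : (Ideal.span {(X 3 : MvPolynomial (Fin 4) ℂ)})
        ≤ Ideal.span {(X 3 : MvPolynomial (Fin 4) ℂ), (X 0)^2 + (X 1)^2 + (X 2)^2} :=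
      Ideal.span_mono (Set.singleton_subset_iff.2 (by simp))
    have h1 : psi p ∈ Ideal.span {(X 3 : MvPolynomial (Fin 4) ℂ),
        (X 0)^2 + (X 1)^2 + (X 2)^2} := by
      rw [hψ]
      exact Ideal.mul_mem_right _ _ (Ideal.subset_span (by simp))
    have := Ideal.add_mem _ (hx3 hd) h1
    simpa using this

/-- Example 3.2, ideal-theoretic form: in `ℂ[x, y, z, w]` (with `x = X 0`, `y = X 1`,
`z = X 2`, `w = X 3`), the radical of the ideal
`(w, (x² + y² + z²) x, (x² + y² + z²) y, (x² + y² + z²) z)` equals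
`(w, x² + y² + z²)`. -/
theorem radical_jacobian_ideal_w_sq_add_quadric_sq :
    (Ideal.span {(X 3 : MvPolynomial (Fin 4) ℂ),
        ((X 0) ^ 2 + (X 1) ^ 2 + (X 2) ^ 2) * X 0,
        ((X 0) ^ 2 + (X 1) ^ 2 + (X 2) ^ 2) * X 1,
        ((X 0) ^ 2 + (X 1) ^ 2 + (X 2) ^ 2) * X 2}).radical =
      Ideal.span {(X 3 : MvPolynomial (Fin 4) ℂ),
        (X 0) ^ 2 + (X 1) ^ 2 + (X 2) ^ 2} := by
  have hq'ne : ((X 0)^2 + (X 1)^2 + (X 2)^2 : MvPolynomial (Fin 3) ℂ) ≠ 0 :=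
    prime_quadric.ne_zero
  have hp' : (Ideal.span {((X 0)^2 + (X 1)^2 + (X 2)^2 : MvPolynomial (Fin 3) ℂ)}).IsPrime :=
    (Ideal.span_singleton_prime hq'ne).2 prime_quadric
  have hPrime : (Ideal.span {(X 3 : MvPolynomial (Fin 4) ℂ),
      (X 0)^2 + (X 1)^2 + (X 2)^2}).IsPrime := by
    rw [span_eq_comap]
    exact hp'.comap _
  have hqmem : ((X 0)^2 + (X 1)^2 + (X 2)^2 : MvPolynomial (Fin 4) ℂ)
      ∈ Ideal.span {(X 3 : MvPolynomial (Fin 4) ℂ), (X 0)^2 + (X 1)^2 + (X 2)^2} :=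
    Ideal.subset_span (by simp)
  apply le_antisymm
  · have hle : Ideal.span {(X 3 : MvPolynomial (Fin 4) ℂ),
        ((X 0)^2 + (X 1)^2 + (X 2)^2) * X 0,
        ((X 0)^2 + (X 1)^2 + (X 2)^2) * X 1,
        ((X 0)^2 + (X 1)^2 + (X 2)^2) * X 2}
        ≤ Ideal.span {(X 3 : MvPolynomial (Fin 4) ℂ), (X 0)^2 + (X 1)^2 + (X 2)^2} := by
      rw [Ideal.span_le]
      rintro r (rfl | rfl | rfl | rfl)
      · exact Ideal.subset_span (by simp)
      · exact SetLike.mem_coe.2 (Ideal.mul_mem_right _ _ hqmem)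
      · exact SetLike.mem_coe.2 (Ideal.mul_mem_right _ _ hqmem)
      · exact SetLike.mem_coe.2 (Ideal.mul_mem_right _ _ hqmem)
    calc _ ≤ (Ideal.span {(X 3 : MvPolynomial (Fin 4) ℂ),
          (X 0)^2 + (X 1)^2 + (X 2)^2}).radical := Ideal.radical_mono hle
    _ = _ := hPrime.radical
  · rw [Ideal.span_le]
    rintro r (rfl | rfl)
    · exact Ideal.le_radical (Ideal.subset_span (by simp))
    · refine SetLike.mem_coe.2 (Ideal.mem_radical_iff.2 ⟨2, ?_⟩)
      have hid : ((X 0)^2 + (X 1)^2 + (X 2)^2 : MvPolynomial (Fin 4) ℂ)^2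
          = ((X 0)^2 + (X 1)^2 + (X 2)^2) * X 0 * X 0
            + (((X 0)^2 + (X 1)^2 + (X 2)^2) * X 1 * X 1
              + ((X 0)^2 + (X 1)^2 + (X 2)^2) * X 2 * X 2) := by ring
      rw [hid]
      refine Ideal.add_mem _ (Ideal.mul_mem_right _ _ (Ideal.subset_span (by simp)))
        (Ideal.add_mem _ (Ideal.mul_mem_right _ _ (Ideal.subset_span (by simp)))
          (Ideal.mul_mem_right _ _ (Ideal.subset_span (by simp))))
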